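/- Let q be a prime power with q ≡ 1 (mod 4), and set m = (q+1)/2. Then there exist circulant matrices A, B, C, D of order m with entries in {−1, +1} (indexed by ℤ/mℤ) satisfying Aᵀ = A, B = C, and A·Aᵀ + B·Bᵀ + C·Cᵀ + D·Dᵀ = 4m·I (such a quadruple is called propus matrices); consequently there exists a symmetric Hadamard matrix of order 2(q+1). -/

import Mathlib

open Matrix Finset

set_option linter.unusedSectionVars false
set_option linter.unusedVariables false
set_option maxHeartbeats 1000000

/-- A matrix indexed by `ZMod v` is circulant if its entries depend only on
the difference of the indices, i.e. it is invariant under simultaneous shifts. -/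
def IsCirculant {v : ℕ} (M : Matrix (ZMod v) (ZMod v) ℤ) : Prop :=
  ∀ i j k : ZMod v, M (i + k) (j + k) = M i j

namespace Propus

variable {v : ℕ} [NeZero v]

def Rmat (v : ℕ) : Matrix (ZMod v) (ZMod v) ℤ := fun i j => if i + j = 0 then 1 else 0

lemma Rmat_transpose : (Rmat v)ᵀ = Rmat v := by
  ext i j; simp [Rmat, Matrix.transpose_apply, add_comm]

lemma mul_Rmat_apply (X : Matrix (ZMod v) (ZMod v) ℤ) (i j : ZMod v) :
    (X * Rmat v) i j = X i (-j) := by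
  rw [Matrix.mul_apply]
  have h : ∀ k : ZMod v, X i k * Rmat v k j = if k = -j then X i k else 0 := by
    intro k
    by_cases hk : k = -j
    · subst hk; simp [Rmat]
    · have : ¬ (k + j = 0) := fun hc => hk (eq_neg_of_add_eq_zero_left hc)
      simp [Rmat, this, hk]
  simp only [h]
  simp

lemma Rmat_mul_apply (X : Matrix (ZMod v) (ZMod v) ℤ) (i j : ZMod v) :
    (Rmat v * X) i j = X (-i) j := by
  rw [Matrix.mul_apply]
  have h : ∀ k : ZMod v, Rmat v i k * X k j = if k = -i then X k j else 0 := by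
    intro k
    by_cases hk : k = -i
    · subst hk; simp [Rmat]
    · have : ¬ (i + k = 0) := fun hc => hk (eq_neg_of_add_eq_zero_right hc)
      simp [Rmat, this, hk]
  simp only [h]
  simp

lemma Rmat_mul_Rmat : (Rmat v) * (Rmat v) = 1 := by
  ext i j
  rw [mul_Rmat_apply]
  by_cases h : i = j
  · subst h; simp [Rmat, Matrix.one_apply]
  · have : ¬ (i + -j = 0) := by
      intro hc
      exact h (by linear_combination (norm := ring_nf) hc)
    simp [Rmat, Matrix.one_apply, this, h]

lemma circulant_transpose {X : Matrix (ZMod v) (ZMod v) ℤ} (hX : IsCirculant X) :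
    IsCirculant Xᵀ := fun i j k => hX j i k

lemma circulant_mul_comm {X Y : Matrix (ZMod v) (ZMod v) ℤ}
    (hX : IsCirculant X) (hY : IsCirculant Y) : X * Y = Y * X := by
  ext i j
  rw [Matrix.mul_apply, Matrix.mul_apply]
  apply Fintype.sum_equiv (Equiv.subLeft (i + j))
  intro k
  simp only [Equiv.subLeft_apply]
  have h1 : X (i + j - k) j = X i k := by
    have := hX i k (j - k)
    rw [show i + (j - k) = i + j - k by ring, show k + (j - k) = j by ring] at this
    exact this
  have h2 : Y i (i + j - k) = Y k j := by
    have := hY k j (i - k)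
    rw [show k + (i - k) = i by ring, show j + (i - k) = i + j - k by ring] at this
    exact this
  rw [h1, h2, mul_comm]

lemma circulant_mul_Rmat_symm {X : Matrix (ZMod v) (ZMod v) ℤ} (hX : IsCirculant X) :
    (X * Rmat v)ᵀ = X * Rmat v := by
  ext i j
  rw [Matrix.transpose_apply, mul_Rmat_apply, mul_Rmat_apply]
  have := hX j (-i) (i - j)
  rw [show j + (i - j) = i by ring, show -i + (i - j) = -j by ring] at this
  exact this.symm

lemma Rmat_mul_circulant {X : Matrix (ZMod v) (ZMod v) ℤ} (hX : IsCirculant X) :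
    Rmat v * X = Xᵀ * Rmat v := by
  ext i j
  rw [Rmat_mul_apply, mul_Rmat_apply, Matrix.transpose_apply]
  have := hX (-j) i (j - i)
  rw [show -j + (j - i) = -i by ring, show i + (j - i) = j by ring] at this
  exact this

lemma circulant_one : IsCirculant (1 : Matrix (ZMod v) (ZMod v) ℤ) := by
  intro i j k
  simp [Matrix.one_apply]

lemma circulant_add {X Y : Matrix (ZMod v) (ZMod v) ℤ}
    (hX : IsCirculant X) (hY : IsCirculant Y) : IsCirculant (X + Y) := by
  intro i j k
  simp [Matrix.add_apply, hX i j k, hY i j k]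

lemma circulant_sub {X Y : Matrix (ZMod v) (ZMod v) ℤ}
    (hX : IsCirculant X) (hY : IsCirculant Y) : IsCirculant (X - Y) := by
  intro i j k
  simp [Matrix.sub_apply, hX i j k, hY i j k]

lemma mulR_mulR_t (X Y : Matrix (ZMod v) (ZMod v) ℤ) :
    (X * Rmat v) * (Y * Rmat v)ᵀ = X * Yᵀ := by
  rw [Matrix.transpose_mul, Rmat_transpose, Matrix.mul_assoc,
    ← Matrix.mul_assoc (Rmat v), Rmat_mul_Rmat, Matrix.one_mul]

/-- The propus array. -/
def blocksM (v : ℕ) [NeZero v] (A B D : Matrix (ZMod v) (ZMod v) ℤ) :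
    Fin 4 → Fin 4 → Matrix (ZMod v) (ZMod v) ℤ := fun s t =>
  ![![A, B * Rmat v, B * Rmat v, D * Rmat v],
    ![B * Rmat v, Dᵀ * Rmat v, -A, -(Bᵀ * Rmat v)],
    ![B * Rmat v, -A, -(Dᵀ * Rmat v), Bᵀ * Rmat v],
    ![D * Rmat v, -(Bᵀ * Rmat v), Bᵀ * Rmat v, -A]] s t

lemma hadamard_of_propus (A B D : Matrix (ZMod v) (ZMod v) ℤ)
    (hA : IsCirculant A) (hB : IsCirculant B) (hD : IsCirculant D)
    (hAs : Aᵀ = A)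
    (hAe : ∀ i j, A i j = 1 ∨ A i j = -1)
    (hBe : ∀ i j, B i j = 1 ∨ B i j = -1)
    (hDe : ∀ i j, D i j = 1 ∨ D i j = -1)
    (hsum : A * Aᵀ + B * Bᵀ + B * Bᵀ + D * Dᵀ = ((4 * v : ℕ) : ℤ) • 1) :
    ∃ H : Matrix (Fin 4 × ZMod v) (Fin 4 × ZMod v) ℤ,
      (∀ i j, H i j = 1 ∨ H i j = -1) ∧
      (H * Hᵀ = ((4 * v : ℕ) : ℤ) • (1 : Matrix (Fin 4 × ZMod v) (Fin 4 × ZMod v) ℤ)) ∧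
      Hᵀ = H := by
  have hBt := circulant_transpose hB
  have hDt := circulant_transpose hD
  have hsum' : A * A + B * Bᵀ + B * Bᵀ + D * Dᵀ = ((4 * v : ℕ) : ℤ) • 1 := by
    rw [← hsum, hAs]
  have F2 : ∀ (X Y : Matrix (ZMod v) (ZMod v) ℤ), IsCirculant Y →
      X * (Y * Rmat v)ᵀ = X * Y * Rmat v := by
    intro X Y hY
    rw [circulant_mul_Rmat_symm hY, ← Matrix.mul_assoc]
  have F3 : ∀ (X : Matrix (ZMod v) (ZMod v) ℤ), (X * Rmat v) * A = X * A * Rmat v := by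
    intro X
    rw [Matrix.mul_assoc, Rmat_mul_circulant hA, hAs, ← Matrix.mul_assoc]
  have hF2B := F2 A B hB
  have hF2Bt := F2 A Bᵀ hBt
  have hF2D := F2 A D hD
  have hF2Dt := F2 A Dᵀ hDt
  have hF3B := F3 B
  have hF3Bt := F3 Bᵀ
  have hF3D := F3 D
  have hF3Dt := F3 Dᵀ
  have cAB : A * B = B * A := circulant_mul_comm hA hB
  have cABt : A * Bᵀ = Bᵀ * A := circulant_mul_comm hA hBt
  have cAD : A * D = D * A := circulant_mul_comm hA hD
  have cADt : A * Dᵀ = Dᵀ * A := circulant_mul_comm hA hDt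
  have cDB : D * B = B * D := circulant_mul_comm hD hB
  have cDtB : Dᵀ * B = B * Dᵀ := circulant_mul_comm hDt hB
  have cBtB : Bᵀ * B = B * Bᵀ := circulant_mul_comm hBt hB
  have cDtD : Dᵀ * D = D * Dᵀ := circulant_mul_comm hDt hD
  have cBBt : B * Bᵀᵀ = B * B := by rw [Matrix.transpose_transpose]
  have h00 : (∑ u : Fin 4, blocksM v A B D 0 u * (blocksM v A B D 0 u)ᵀ)
      = ((4 * v : ℕ) : ℤ) • 1 := by
    rw [Fin.sum_univ_four]
    show A * Aᵀ + (B * Rmat v) * (B * Rmat v)ᵀ + (B * Rmat v) * (B * Rmat v)ᵀ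
        + (D * Rmat v) * (D * Rmat v)ᵀ = _
    rw [mulR_mulR_t, mulR_mulR_t, hsum]
  have h11 : (∑ u : Fin 4, blocksM v A B D 1 u * (blocksM v A B D 1 u)ᵀ)
      = ((4 * v : ℕ) : ℤ) • 1 := by
    rw [Fin.sum_univ_four]
    show (B * Rmat v) * (B * Rmat v)ᵀ + (Dᵀ * Rmat v) * (Dᵀ * Rmat v)ᵀ
        + (-A) * (-A)ᵀ + (-(Bᵀ * Rmat v)) * (-(Bᵀ * Rmat v))ᵀ = _
    simp only [Matrix.transpose_neg, Matrix.neg_mul, Matrix.mul_neg, neg_neg,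
      Matrix.transpose_transpose, hAs, mulR_mulR_t, cDtD, cBtB]
    calc B * Bᵀ + D * Dᵀ + A * A + B * Bᵀ
        = A * A + B * Bᵀ + B * Bᵀ + D * Dᵀ := by abel
      _ = _ := hsum'
  have h22 : (∑ u : Fin 4, blocksM v A B D 2 u * (blocksM v A B D 2 u)ᵀ)
      = ((4 * v : ℕ) : ℤ) • 1 := by
    rw [Fin.sum_univ_four]
    show (B * Rmat v) * (B * Rmat v)ᵀ + (-A) * (-A)ᵀ + (-(Dᵀ * Rmat v)) * (-(Dᵀ * Rmat v))ᵀ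
        + (Bᵀ * Rmat v) * (Bᵀ * Rmat v)ᵀ = _
    simp only [Matrix.transpose_neg, Matrix.neg_mul, Matrix.mul_neg, neg_neg,
      Matrix.transpose_transpose, hAs, mulR_mulR_t, cDtD, cBtB]
    calc B * Bᵀ + A * A + D * Dᵀ + B * Bᵀ
        = A * A + B * Bᵀ + B * Bᵀ + D * Dᵀ := by abel
      _ = _ := hsum'
  have h33 : (∑ u : Fin 4, blocksM v A B D 3 u * (blocksM v A B D 3 u)ᵀ)
      = ((4 * v : ℕ) : ℤ) • 1 := by
    rw [Fin.sum_univ_four]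
    show (D * Rmat v) * (D * Rmat v)ᵀ + (-(Bᵀ * Rmat v)) * (-(Bᵀ * Rmat v))ᵀ
        + (Bᵀ * Rmat v) * (Bᵀ * Rmat v)ᵀ + (-A) * (-A)ᵀ = _
    simp only [Matrix.transpose_neg, Matrix.neg_mul, Matrix.mul_neg, neg_neg,
      Matrix.transpose_transpose, hAs, mulR_mulR_t, cDtD, cBtB]
    calc D * Dᵀ + B * Bᵀ + B * Bᵀ + A * A
        = A * A + B * Bᵀ + B * Bᵀ + D * Dᵀ := by abel
      _ = _ := hsum'
  have h01 : (∑ u : Fin 4, blocksM v A B D 0 u * (blocksM v A B D 1 u)ᵀ) = 0 := by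
    rw [Fin.sum_univ_four]
    show A * (B * Rmat v)ᵀ + (B * Rmat v) * (Dᵀ * Rmat v)ᵀ + (B * Rmat v) * (-A)ᵀ
        + (D * Rmat v) * (-(Bᵀ * Rmat v))ᵀ = 0
    simp only [Matrix.transpose_neg, Matrix.neg_mul, Matrix.mul_neg, neg_neg,
      Matrix.transpose_transpose, hAs, mulR_mulR_t, hF2B, hF3B, cAB, cDtB, cDB]
    abel
  have h02 : (∑ u : Fin 4, blocksM v A B D 0 u * (blocksM v A B D 2 u)ᵀ) = 0 := by
    rw [Fin.sum_univ_four]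
    show A * (B * Rmat v)ᵀ + (B * Rmat v) * (-A)ᵀ + (B * Rmat v) * (-(Dᵀ * Rmat v))ᵀ
        + (D * Rmat v) * (Bᵀ * Rmat v)ᵀ = 0
    simp only [Matrix.transpose_neg, Matrix.neg_mul, Matrix.mul_neg, neg_neg,
      Matrix.transpose_transpose, hAs, mulR_mulR_t, hF2B, hF3B, cAB, cDtB, cDB]
    abel
  have h03 : (∑ u : Fin 4, blocksM v A B D 0 u * (blocksM v A B D 3 u)ᵀ) = 0 := by
    rw [Fin.sum_univ_four]
    show A * (D * Rmat v)ᵀ + (B * Rmat v) * (-(Bᵀ * Rmat v))ᵀ + (B * Rmat v) * (Bᵀ * Rmat v)ᵀ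
        + (D * Rmat v) * (-A)ᵀ = 0
    simp only [Matrix.transpose_neg, Matrix.neg_mul, Matrix.mul_neg, neg_neg,
      Matrix.transpose_transpose, hAs, mulR_mulR_t, hF2D, hF3D, cAD]
    abel
  have h12 : (∑ u : Fin 4, blocksM v A B D 1 u * (blocksM v A B D 2 u)ᵀ) = 0 := by
    rw [Fin.sum_univ_four]
    show (B * Rmat v) * (B * Rmat v)ᵀ + (Dᵀ * Rmat v) * (-A)ᵀ + (-A) * (-(Dᵀ * Rmat v))ᵀ
        + (-(Bᵀ * Rmat v)) * (Bᵀ * Rmat v)ᵀ = 0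
    simp only [Matrix.transpose_neg, Matrix.neg_mul, Matrix.mul_neg, neg_neg,
      Matrix.transpose_transpose, hAs, mulR_mulR_t, hF2Dt, hF3Dt, cADt, cBtB]
    abel
  have h13 : (∑ u : Fin 4, blocksM v A B D 1 u * (blocksM v A B D 3 u)ᵀ) = 0 := by
    rw [Fin.sum_univ_four]
    show (B * Rmat v) * (D * Rmat v)ᵀ + (Dᵀ * Rmat v) * (-(Bᵀ * Rmat v))ᵀ
        + (-A) * (Bᵀ * Rmat v)ᵀ + (-(Bᵀ * Rmat v)) * (-A)ᵀ = 0
    simp only [Matrix.transpose_neg, Matrix.neg_mul, Matrix.mul_neg, neg_neg,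
      Matrix.transpose_transpose, hAs, mulR_mulR_t, hF2Bt, hF3Bt, cABt, cDtB]
    abel
  have h23 : (∑ u : Fin 4, blocksM v A B D 2 u * (blocksM v A B D 3 u)ᵀ) = 0 := by
    rw [Fin.sum_univ_four]
    show (B * Rmat v) * (D * Rmat v)ᵀ + (-A) * (-(Bᵀ * Rmat v))ᵀ
        + (-(Dᵀ * Rmat v)) * (Bᵀ * Rmat v)ᵀ + (Bᵀ * Rmat v) * (-A)ᵀ = 0
    simp only [Matrix.transpose_neg, Matrix.neg_mul, Matrix.mul_neg, neg_neg,
      Matrix.transpose_transpose, hAs, mulR_mulR_t, hF2Bt, hF3Bt, cABt, cDtB]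
    abel
  have flip : ∀ s t : Fin 4, (∑ u : Fin 4, blocksM v A B D s u * (blocksM v A B D t u)ᵀ) = 0 →
      (∑ u : Fin 4, blocksM v A B D t u * (blocksM v A B D s u)ᵀ) = 0 := by
    intro s t h
    have h2 := congrArg Matrix.transpose h
    rw [Matrix.transpose_sum] at h2
    simp only [Matrix.transpose_mul, Matrix.transpose_transpose, Matrix.transpose_zero] at h2
    exact h2
  have hdiag : ∀ s : Fin 4, (∑ u : Fin 4, blocksM v A B D s u * (blocksM v A B D s u)ᵀ)
      = ((4 * v : ℕ) : ℤ) • 1 := by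
    intro s
    fin_cases s
    · exact h00
    · exact h11
    · exact h22
    · exact h33
  have hoff : ∀ s t : Fin 4, s ≠ t →
      (∑ u : Fin 4, blocksM v A B D s u * (blocksM v A B D t u)ᵀ) = 0 := by
    intro s t hst
    fin_cases s <;> fin_cases t
    · exact absurd rfl hst
    · exact h01
    · exact h02
    · exact h03
    · exact flip _ _ h01
    · exact absurd rfl hst
    · exact h12
    · exact h13
    · exact flip _ _ h02
    · exact flip _ _ h12
    · exact absurd rfl hst
    · exact h23
    · exact flip _ _ h03
    · exact flip _ _ h13
    · exact flip _ _ h23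
    · exact absurd rfl hst
  refine ⟨fun x y => blocksM v A B D x.1 y.1 x.2 y.2, ?_, ?_, ?_⟩
  · rintro ⟨s, i⟩ ⟨t, j⟩
    have hBRe : ∀ i j, (B * Rmat v) i j = 1 ∨ (B * Rmat v) i j = -1 := by
      intro i j; rw [mul_Rmat_apply]; exact hBe _ _
    have hDRe : ∀ i j, (D * Rmat v) i j = 1 ∨ (D * Rmat v) i j = -1 := by
      intro i j; rw [mul_Rmat_apply]; exact hDe _ _
    have hBtRe : ∀ i j, (Bᵀ * Rmat v) i j = 1 ∨ (Bᵀ * Rmat v) i j = -1 := by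
      intro i j; rw [mul_Rmat_apply]; exact hBe _ _
    have hDtRe : ∀ i j, (Dᵀ * Rmat v) i j = 1 ∨ (Dᵀ * Rmat v) i j = -1 := by
      intro i j; rw [mul_Rmat_apply]; exact hDe _ _
    have negswap : ∀ (X : Matrix (ZMod v) (ZMod v) ℤ),
        (∀ i j, X i j = 1 ∨ X i j = -1) → ∀ i j, (-X) i j = 1 ∨ (-X) i j = -1 := by
      intro X hX i j
      rcases hX i j with h | h <;> simp [Matrix.neg_apply, h]
    fin_cases s <;> fin_cases t
    · exact hAe i j
    · exact hBRe i j
    · exact hBRe i j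
    · exact hDRe i j
    · exact hBRe i j
    · exact hDtRe i j
    · exact negswap _ hAe i j
    · exact negswap _ hBtRe i j
    · exact hBRe i j
    · exact negswap _ hAe i j
    · exact negswap _ hDtRe i j
    · exact hBtRe i j
    · exact hDRe i j
    · exact negswap _ hBtRe i j
    · exact hBtRe i j
    · exact negswap _ hAe i j
  · ext ⟨s, i⟩ ⟨t, j⟩
    erw [Matrix.mul_apply]
    have e1 : ∀ x : Fin 4 × ZMod v,
        (fun x y => blocksM v A B D x.1 y.1 x.2 y.2) (s, i) x *
          (fun x y => blocksM v A B D x.1 y.1 x.2 y.2)ᵀ x (t, j)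
        = blocksM v A B D s x.1 i x.2 * blocksM v A B D t x.1 j x.2 := fun x => rfl
    rw [Finset.sum_congr rfl fun x _ => e1 x, Fintype.sum_prod_type]
    have e2 : ∀ u : Fin 4, (∑ k : ZMod v, blocksM v A B D s u i k * blocksM v A B D t u j k)
        = (blocksM v A B D s u * (blocksM v A B D t u)ᵀ) i j := by
      intro u
      rw [Matrix.mul_apply]
      simp only [Matrix.transpose_apply]
    rw [Finset.sum_congr rfl fun u _ => e2 u, ← Matrix.sum_apply]
    by_cases hst : s = t
    · subst hst
      rw [hdiag s]
      by_cases hij : i = j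
      · subst hij; simp [Matrix.smul_apply, Matrix.one_apply]
      · simp [Matrix.smul_apply, Matrix.one_apply, Prod.ext_iff, hij]
    · rw [hoff s t hst]
      simp [Matrix.smul_apply, Matrix.one_apply, Prod.ext_iff, hst]
  · have hnA : (-A)ᵀ = -A := by rw [Matrix.transpose_neg, hAs]
    have hBR := circulant_mul_Rmat_symm hB
    have hDR := circulant_mul_Rmat_symm hD
    have hBtR := circulant_mul_Rmat_symm hBt
    have hDtR := circulant_mul_Rmat_symm hDt
    have hnBtR : (-(Bᵀ * Rmat v))ᵀ = -(Bᵀ * Rmat v) := by rw [Matrix.transpose_neg, hBtR]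
    have hnDtR : (-(Dᵀ * Rmat v))ᵀ = -(Dᵀ * Rmat v) := by rw [Matrix.transpose_neg, hDtR]
    have hsymm : ∀ s t, (blocksM v A B D s t)ᵀ = blocksM v A B D t s := by
      intro s t
      fin_cases s <;> fin_cases t
      · exact hAs
      · exact hBR
      · exact hBR
      · exact hDR
      · exact hBR
      · exact hDtR
      · exact hnA
      · exact hnBtR
      · exact hBR
      · exact hnA
      · exact hnDtR
      · exact hBtR
      · exact hDR
      · exact hnBtR
      · exact hBtR
      · exact hnA
    ext ⟨s, i⟩ ⟨t, j⟩
    show blocksM v A B D t s j i = blocksM v A B D s t i j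
    conv_rhs => rw [← hsymm t s]
    rfl

/-- quadratic-character-like function -/
def etaF (s : ℕ) {K : Type} [Field K] [DecidableEq K] (x : K) : ℤ :=
  if x = 0 then 0 else if x ^ s = 1 then 1 else -1

/-- the bilinear-ish form -/
def fF (q : ℕ) {K : Type} [Field K] (d x y : K) : K := (x * y ^ q - x ^ q * y) * d⁻¹

structure Setup (q s : ℕ) (K : Type) [Field K] [Fintype K] [DecidableEq K] (g : Kˣ) :
    Prop where
  hqs : q = 2 * s + 1
  hs2 : 2 ≤ s
  hse : s % 2 = 0
  hcard : Fintype.card K = q ^ 2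
  horder : orderOf g = 4 * s * (s + 1)
  hgen : ∀ x : Kˣ, x ∈ Subgroup.zpowers g
  hfrob : ∀ x y : K, (x - y) ^ q = x ^ q - y ^ q
  hK2 : (-1 : K) ≠ 1

variable {q s : ℕ} {K : Type} [Field K] [Fintype K] [DecidableEq K] {g : Kˣ}

lemma Setup.pow_qq (S : Setup q s K g) (x : K) : (x ^ q) ^ q = x := by
  rw [← pow_mul, ← sq, ← S.hcard, FiniteField.pow_card]

lemma Setup.gK_ne_zero (S : Setup q s K g) (t : ℕ) : (g : K) ^ t ≠ 0 := by
  exact pow_ne_zero _ (Units.ne_zero g)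

lemma Setup.gpow_eq_one_iff (S : Setup q s K g) (t : ℕ) :
    (g : K) ^ t = 1 ↔ 4 * s * (s + 1) ∣ t := by
  rw [← S.horder]
  constructor
  · intro h
    apply orderOf_dvd_of_pow_eq_one
    have : ((g ^ t : Kˣ) : K) = 1 := by push_cast; exact h
    exact Units.ext this
  · intro h
    have := orderOf_dvd_iff_pow_eq_one.mp h
    calc (g : K) ^ t = ((g ^ t : Kˣ) : K) := by push_cast; ring
      _ = 1 := by rw [this]; rfl

lemma Setup.gpow_eq_gpow_iff (S : Setup q s K g) (a b : ℕ) :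
    (g : K) ^ a = (g : K) ^ b ↔ a ≡ b [MOD 4 * s * (s + 1)] := by
  rw [← S.horder]
  constructor
  · intro h
    apply pow_eq_pow_iff_modEq.mp
    apply Units.ext
    push_cast
    exact h
  · intro h
    have : (g ^ a : Kˣ) = g ^ b := pow_eq_pow_iff_modEq.mpr h
    calc (g : K) ^ a = ((g ^ a : Kˣ) : K) := by push_cast; ring
      _ = ((g ^ b : Kˣ) : K) := by rw [this]
      _ = (g : K) ^ b := by push_cast; ring

lemma Setup.neg_one_eq (S : Setup q s K g) : (g : K) ^ (2 * s * (s + 1)) = -1 := by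
  have h2 : ((g : K) ^ (2 * s * (s + 1))) * ((g : K) ^ (2 * s * (s + 1))) = 1 := by
    rw [← pow_add]
    rw [S.gpow_eq_one_iff]
    exact ⟨1, by ring⟩
  rcases mul_self_eq_one_iff.mp h2 with h | h
  · exfalso
    rw [S.gpow_eq_one_iff] at h
    have hle := Nat.le_of_dvd (by nlinarith [S.hs2]) h
    nlinarith [S.hs2]
  · exact h

def IsD (q : ℕ) {K : Type} [Field K] (x : K) : Prop := x ^ q = x

lemma Setup.isD_zero (S : Setup q s K g) : IsD q (0 : K) := by
  have : q ≠ 0 := by rw [S.hqs]; omega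
  simp [IsD, zero_pow this]

lemma Setup.isD_mul (S : Setup q s K g) {x y : K} (hx : IsD q x) (hy : IsD q y) :
    IsD q (x * y) := by
  unfold IsD at *
  rw [mul_pow, hx, hy]

lemma Setup.isD_inv (S : Setup q s K g) {x : K} (hx : IsD q x) : IsD q x⁻¹ := by
  unfold IsD at *
  rw [inv_pow, hx]

lemma Setup.isD_neg_one (S : Setup q s K g) : IsD q (-1 : K) := by
  unfold IsD
  rw [S.hqs]
  exact Odd.neg_one_pow ⟨s, by ring⟩

lemma Setup.pow_two_s (S : Setup q s K g) {x : K} (hx : IsD q x) (hx0 : x ≠ 0) :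
    x ^ (2 * s) = 1 := by
  have h : x ^ (2 * s) * x = 1 * x := by
    rw [one_mul, ← pow_succ, ← S.hqs]; exact hx
  exact mul_right_cancel₀ hx0 h

lemma Setup.pow_s_pm (S : Setup q s K g) {x : K} (hx : IsD q x) (hx0 : x ≠ 0) :
    x ^ s = 1 ∨ x ^ s = -1 := by
  apply mul_self_eq_one_iff.mp
  rw [← pow_add]
  rw [show s + s = 2 * s by ring]
  exact S.pow_two_s hx hx0

lemma eta_zero {s : ℕ} : etaF s (0 : K) = 0 := by simp [etaF]

lemma eta_pm {s : ℕ} {x : K} (hx0 : x ≠ 0) : etaF s x = 1 ∨ etaF s x = -1 := by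
  unfold etaF
  rw [if_neg hx0]
  split <;> simp

lemma eta_ne_zero {s : ℕ} {x : K} (hx0 : x ≠ 0) : etaF s x ≠ 0 := by
  rcases eta_pm (s := s) hx0 with h | h <;> rw [h] <;> decide

lemma Setup.eta_mul (S : Setup q s K g) {x y : K} (hx : IsD q x) (hy : IsD q y) :
    etaF s (x * y) = etaF s x * etaF s y := by
  by_cases hx0 : x = 0
  · subst hx0; simp [etaF]
  by_cases hy0 : y = 0
  · subst hy0; simp [etaF]
  have hxy0 : x * y ≠ 0 := mul_ne_zero hx0 hy0
  have hpow : (x * y) ^ s = x ^ s * y ^ s := mul_pow x y s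
  rcases S.pow_s_pm hx hx0 with h1 | h1 <;> rcases S.pow_s_pm hy hy0 with h2 | h2 <;>
    · unfold etaF
      rw [if_neg hx0, if_neg hy0, if_neg hxy0, hpow, h1, h2]
      simp [S.hK2]

lemma Setup.eta_sq (S : Setup q s K g) {x : K} (hx0 : x ≠ 0) :
    etaF s x * etaF s x = 1 := by
  rcases eta_pm (s := s) hx0 with h | h <;> rw [h] <;> decide

lemma Setup.eta_neg_one (S : Setup q s K g) : etaF s (-1 : K) = 1 := by
  unfold etaF
  rw [if_neg (by simp : (-1 : K) ≠ 0), if_pos ((Nat.even_iff.mpr S.hse).neg_one_pow)]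

lemma Setup.eta_neg (S : Setup q s K g) {x : K} (hx : IsD q x) :
    etaF s (-x) = etaF s x := by
  rw [show -x = -1 * x by ring, S.eta_mul S.isD_neg_one hx, S.eta_neg_one, one_mul]

/-- the generator of the "diagonal" cyclic group -/
lemma Setup.c_pow_s (S : Setup q s K g) : ((g : K) ^ (2 * s + 2)) ^ s = -1 := by
  rw [← pow_mul, show (2 * s + 2) * s = 2 * s * (s + 1) by ring]
  exact S.neg_one_eq

lemma Setup.eta_c_pow (S : Setup q s K g) (k : ℕ) :
    etaF s (((g : K) ^ (2 * s + 2)) ^ k) = (-1) ^ k := by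
  have hne : ((g : K) ^ (2 * s + 2)) ^ k ≠ 0 := pow_ne_zero _ (S.gK_ne_zero _)
  have hpow : (((g : K) ^ (2 * s + 2)) ^ k) ^ s = (-1 : K) ^ k := by
    rw [← pow_mul, mul_comm k s, pow_mul, S.c_pow_s]
  unfold etaF
  rw [if_neg hne, hpow]
  rcases Nat.even_or_odd k with hk | hk
  · rw [hk.neg_one_pow, if_pos rfl, hk.neg_one_pow]
  · rw [hk.neg_one_pow, if_neg S.hK2, hk.neg_one_pow]

lemma Setup.c_isD (S : Setup q s K g) : IsD q ((g : K) ^ (2 * s + 2)) := by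
  unfold IsD
  rw [← pow_mul, S.gpow_eq_gpow_iff]
  have h : (2 * s + 2) * q = (2 * s + 2) + 4 * s * (s + 1) := by rw [S.hqs]; ring
  rw [h]
  exact Nat.add_mod_right _ _

lemma Setup.isD_pow (S : Setup q s K g) {x : K} (hx : IsD q x) (k : ℕ) : IsD q (x ^ k) := by
  unfold IsD at *
  rw [← pow_mul, mul_comm, pow_mul, hx]


-- δ
lemma Setup.delta_pow_q (S : Setup q s K g) :
    ((g : K) ^ (s + 1)) ^ q = -((g : K) ^ (s + 1)) := by
  have h1 : ((g : K) ^ (s + 1)) ^ q = (g : K) ^ ((s + 1) * q) := by rw [pow_mul]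
  have h2 : (s + 1) * q = 2 * s * (s + 1) + (s + 1) := by rw [S.hqs]; ring
  rw [h1, h2, pow_add, S.neg_one_eq]
  ring

lemma Setup.delta_ne_zero (S : Setup q s K g) : ((g : K) ^ (s + 1)) ≠ 0 :=
  S.gK_ne_zero _

lemma Setup.f_isD (S : Setup q s K g) (x y : K) :
    IsD q (fF q ((g : K) ^ (s + 1)) x y) := by
  unfold IsD fF
  set d := (g : K) ^ (s + 1) with hd
  have h1 : (x * y ^ q - x ^ q * y) ^ q = x ^ q * y - x * y ^ q := by
    rw [S.hfrob, mul_pow, mul_pow, S.pow_qq, S.pow_qq]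
  rw [mul_pow, h1, inv_pow, S.delta_pow_q, inv_neg]
  ring

lemma Setup.f_antisymm (S : Setup q s K g) (x y : K) :
    fF q ((g : K) ^ (s + 1)) x y = -(fF q ((g : K) ^ (s + 1)) y x) := by
  unfold fF; ring

lemma Setup.f_lin1 (S : Setup q s K g) {c : K} (hc : IsD q c) (x y : K) :
    fF q ((g : K) ^ (s + 1)) (c * x) y = c * fF q ((g : K) ^ (s + 1)) x y := by
  unfold IsD at hc
  unfold fF
  rw [mul_pow, hc]
  ring

lemma Setup.f_lin2 (S : Setup q s K g) {c : K} (hc : IsD q c) (x y : K) :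
    fF q ((g : K) ^ (s + 1)) x (c * y) = c * fF q ((g : K) ^ (s + 1)) x y := by
  unfold IsD at hc
  unfold fF
  rw [mul_pow, hc]
  ring

lemma Setup.plucker (S : Setup q s K g) (x y z : K) :
    fF q ((g : K) ^ (s + 1)) x y * z =
      fF q ((g : K) ^ (s + 1)) x z * y - fF q ((g : K) ^ (s + 1)) y z * x := by
  unfold fF; ring

lemma Setup.f_pow_eval (S : Setup q s K g) (a t : ℕ) :
    fF q ((g : K) ^ (s + 1)) ((g : K) ^ a) ((g : K) ^ t)
      = ((g : K) ^ (a + t * q) - (g : K) ^ (a * q + t)) * (((g : K) ^ (s + 1))⁻¹) := by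
  unfold fF
  rw [← pow_mul, ← pow_mul, ← pow_add, ← pow_add]

lemma Setup.f_zero_iff (S : Setup q s K g) (a t : ℕ) :
    fF q ((g : K) ^ (s + 1)) ((g : K) ^ a) ((g : K) ^ t) = 0 ↔
      ((2 * s + 2 : ℕ) : ℤ) ∣ ((t : ℤ) - (a : ℤ)) := by
  rw [S.f_pow_eval]
  rw [mul_eq_zero]
  have hd : ¬ ((((g : K) ^ (s + 1))⁻¹) = 0) := by
    simp [S.delta_ne_zero]
  simp only [hd, or_false]
  rw [sub_eq_zero]
  rw [S.gpow_eq_gpow_iff]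
  rw [Nat.modEq_iff_dvd]
  constructor
  · intro h
    -- (4s(s+1) : ℤ) ∣ (a*q+t) - (a+t*q) = (a - t)*(2s)
    have heq : ((a * q + t : ℕ) : ℤ) - ((a + t * q : ℕ) : ℤ)
        = (2 * s : ℤ) * ((a : ℤ) - t) := by
      push_cast [S.hqs]; ring
    rw [heq] at h
    have h4 : (4 * s * (s + 1) : ℤ) = (2 * s) * (2 * s + 2) := by push_cast; ring
    rw [show ((4 * s * (s + 1) : ℕ) : ℤ) = (2 * s : ℤ) * (2 * s + 2 : ℤ) by push_cast; ring]
      at h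
    have hs0 : (2 * s : ℤ) ≠ 0 := by
      have := S.hs2; positivity
    have := (mul_dvd_mul_iff_left hs0).mp h
    have : ((2 * s + 2 : ℤ)) ∣ ((a : ℤ) - t) := this
    rw [show ((t : ℤ) - a) = -((a : ℤ) - t) by ring]
    exact_mod_cast dvd_neg.mpr this
  · intro h
    have heq : ((a * q + t : ℕ) : ℤ) - ((a + t * q : ℕ) : ℤ)
        = (2 * s : ℤ) * ((a : ℤ) - t) := by
      push_cast [S.hqs]; ring
    rw [heq, show ((4 * s * (s + 1) : ℕ) : ℤ) = (2 * s : ℤ) * (2 * s + 2 : ℤ) by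
      push_cast; ring]
    apply mul_dvd_mul_left
    rw [show ((a : ℤ) - t) = -((t : ℤ) - a) by ring]
    exact dvd_neg.mpr (by exact_mod_cast h)


/-- the set of solutions of x^q = x -/
def Dfin (s : ℕ) (K : Type) [Field K] [DecidableEq K] (g : Kˣ) : Finset K :=
  insert (0 : K) ((Finset.range (2 * s)).image fun k => ((g : K) ^ (2 * s + 2)) ^ k)

lemma Setup.mem_Dfin_of_isD (S : Setup q s K g) {x : K} (hx : IsD q x) :
    x ∈ Dfin s K g := by
  by_cases hx0 : x = 0
  · subst hx0; exact Finset.mem_insert_self _ _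
  apply Finset.mem_insert_of_mem
  -- write x as g^n
  obtain ⟨k, hk⟩ := Subgroup.mem_zpowers_iff.mp (S.hgen (Units.mk0 x hx0))
  have hNpos : 0 < orderOf g := by
    rw [S.horder]; have := S.hs2; positivity
  set n : ℕ := (k % (orderOf g : ℤ)).toNat with hn
  have hkn : g ^ n = Units.mk0 x hx0 := by
    rw [← hk, hn]
    have hnn : (0 : ℤ) ≤ k % (orderOf g : ℤ) := Int.emod_nonneg k (by exact_mod_cast hNpos.ne')
    rw [← zpow_natCast, Int.toNat_of_nonneg hnn, zpow_mod_orderOf]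
  have hxn : (g : K) ^ n = x := by
    calc (g : K) ^ n = ((g ^ n : Kˣ) : K) := by push_cast; ring
      _ = x := by rw [hkn]; rfl
  -- divisibility
  have hdvd : (2 * s + 2 : ℤ) ∣ (n : ℤ) := by
    have h1 : (g : K) ^ (n * q) = (g : K) ^ n := by
      rw [pow_mul, hxn]; exact hx
    rw [S.gpow_eq_gpow_iff, Nat.modEq_iff_dvd] at h1
    have heq : ((n : ℕ) : ℤ) - ((n * q : ℕ) : ℤ) = (2 * s : ℤ) * (-(n : ℤ)) := by
      push_cast [S.hqs]; ring
    rw [heq, show ((4 * s * (s + 1) : ℕ) : ℤ) = (2 * s : ℤ) * (2 * s + 2 : ℤ) by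
      push_cast; ring] at h1
    have hs0 : (2 * s : ℤ) ≠ 0 := by have := S.hs2; positivity
    have := (mul_dvd_mul_iff_left hs0).mp h1
    exact (dvd_neg.mp this)
  obtain ⟨j, hj⟩ : (2 * s + 2 : ℕ) ∣ n := by exact_mod_cast hdvd
  have hc1 : ((g : K) ^ (2 * s + 2)) ^ (2 * s) = 1 := by
    rw [← pow_mul, S.gpow_eq_one_iff]
    exact ⟨1, by ring⟩
  have hxc : x = ((g : K) ^ (2 * s + 2)) ^ (j % (2 * s)) := by
    rw [← pow_eq_pow_mod j hc1, ← pow_mul, ← hj, hxn]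
  rw [hxc]
  apply Finset.mem_image_of_mem
  rw [Finset.mem_range]
  have : 0 < 2 * s := by have := S.hs2; omega
  exact Nat.mod_lt _ this

lemma Setup.injOn_c_pow (S : Setup q s K g) :
    Set.InjOn (fun k => ((g : K) ^ (2 * s + 2)) ^ k) (Finset.range (2 * s)) := by
  intro a ha b hb hab
  simp only [Finset.coe_range, Set.mem_Iio] at ha hb
  simp only at hab
  rw [← pow_mul, ← pow_mul, S.gpow_eq_gpow_iff, Nat.modEq_iff_dvd] at hab
  have heq : (((2 * s + 2) * b : ℕ) : ℤ) - (((2 * s + 2) * a : ℕ) : ℤ)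
      = (2 * s + 2 : ℤ) * ((b : ℤ) - a) := by push_cast; ring
  rw [heq, show ((4 * s * (s + 1) : ℕ) : ℤ) = (2 * s + 2 : ℤ) * (2 * s : ℤ) by
    push_cast; ring] at hab
  have hs0 : (2 * s + 2 : ℤ) ≠ 0 := by positivity
  have hd := (mul_dvd_mul_iff_left hs0).mp hab
  have hz : (b : ℤ) - a = 0 := by
    apply Int.eq_zero_of_abs_lt_dvd hd
    rw [abs_sub_lt_iff]
    constructor <;> [skip; skip] <;> push_cast <;> omega
  omega

lemma Setup.card_Dfin (S : Setup q s K g) : (Dfin s K g).card = 2 * s + 1 := by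
  unfold Dfin
  rw [Finset.card_insert_of_notMem, Finset.card_image_of_injOn S.injOn_c_pow,
    Finset.card_range]
  intro hmem
  obtain ⟨k, _, hk⟩ := Finset.mem_image.mp hmem
  exact pow_ne_zero _ (S.gK_ne_zero _) hk

lemma Setup.sum_Dfin (S : Setup q s K g) : ∑ u ∈ Dfin s K g, etaF s u = 0 := by
  unfold Dfin
  rw [Finset.sum_insert, Finset.sum_image (fun a ha b hb hab => S.injOn_c_pow
    (by simpa using ha) (by simpa using hb) hab)]
  · rw [eta_zero, zero_add]
    have : ∀ k ∈ Finset.range (2 * s), etaF s (((g : K) ^ (2 * s + 2)) ^ k)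
        = (-1 : ℤ) ^ k := fun k _ => S.eta_c_pow k
    rw [Finset.sum_congr rfl this, neg_one_geom_sum, if_pos ⟨s, by ring⟩]
  · intro hmem
    obtain ⟨k, _, hk⟩ := Finset.mem_image.mp hmem
    exact pow_ne_zero _ (S.gK_ne_zero _) hk


lemma Setup.t0_mem (S : Setup q s K g) (a : ℕ) :
    (2 * a) % (2 * s + 2) ∈ Finset.range (2 * s + 2) :=
  Finset.mem_range.mpr (Nat.mod_lt _ (by omega))

lemma Setup.f_t0_zero (S : Setup q s K g) (a : ℕ) :
    fF q ((g : K) ^ (s + 1)) ((g : K) ^ (2 * a)) ((g : K) ^ ((2 * a) % (2 * s + 2))) = 0 := by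
  rw [S.f_zero_iff]
  refine ⟨-(((2 * a) / (2 * s + 2) : ℕ) : ℤ), ?_⟩
  have := Nat.mod_add_div (2 * a) (2 * s + 2)
  push_cast
  push_cast at this
  linarith

lemma Setup.f_ne_zero_of_ne_t0 (S : Setup q s K g) (a t : ℕ) (ht : t < 2 * s + 2)
    (hne : t ≠ (2 * a) % (2 * s + 2)) :
    fF q ((g : K) ^ (s + 1)) ((g : K) ^ (2 * a)) ((g : K) ^ t) ≠ 0 := by
  rw [Ne, S.f_zero_iff]
  intro hdvd
  apply hne
  have hmod : (2 * a) ≡ t [MOD 2 * s + 2] := by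
    rw [Nat.modEq_iff_dvd]
    exact_mod_cast hdvd
  calc t = t % (2 * s + 2) := (Nat.mod_eq_of_lt ht).symm
    _ = (2 * a) % (2 * s + 2) := hmod.symm

lemma Setup.sum_diag (S : Setup q s K g) (a : ℕ) :
    ∑ t ∈ Finset.range (2 * s + 2),
      etaF s (fF q ((g : K) ^ (s + 1)) ((g : K) ^ (2 * a)) ((g : K) ^ t)) *
      etaF s (fF q ((g : K) ^ (s + 1)) ((g : K) ^ (2 * a)) ((g : K) ^ t))
      = (2 * s + 1 : ℤ) := by
  rw [← Finset.sum_erase_add _ _ (S.t0_mem a), S.f_t0_zero a, eta_zero, mul_zero, add_zero]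
  have hone : ∀ t ∈ (Finset.range (2 * s + 2)).erase ((2 * a) % (2 * s + 2)),
      etaF s (fF q ((g : K) ^ (s + 1)) ((g : K) ^ (2 * a)) ((g : K) ^ t)) *
      etaF s (fF q ((g : K) ^ (s + 1)) ((g : K) ^ (2 * a)) ((g : K) ^ t)) = 1 := by
    intro t ht
    obtain ⟨hne, htr⟩ := Finset.mem_erase.mp ht
    exact S.eta_sq (S.f_ne_zero_of_ne_t0 a t (Finset.mem_range.mp htr) hne)
  rw [Finset.sum_congr rfl hone, Finset.sum_const,
    Finset.card_erase_of_mem (S.t0_mem a), Finset.card_range]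
  simp

lemma Setup.sum_off (S : Setup q s K g) (a b : ℕ)
    (hab : ¬ ((s + 1 : ℕ) : ℤ) ∣ ((b : ℤ) - (a : ℤ))) :
    ∑ t ∈ Finset.range (2 * s + 2),
      etaF s (fF q ((g : K) ^ (s + 1)) ((g : K) ^ (2 * a)) ((g : K) ^ t)) *
      etaF s (fF q ((g : K) ^ (s + 1)) ((g : K) ^ (2 * b)) ((g : K) ^ t)) = 0 := by
  set δ : K := (g : K) ^ (s + 1) with hδ
  set x : K := (g : K) ^ (2 * a) with hx
  set y : K := (g : K) ^ (2 * b) with hy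
  set w : ℕ → K := fun t => fF q δ x ((g : K) ^ t) with hw
  set v : ℕ → K := fun t => fF q δ y ((g : K) ^ t) with hv
  set r : ℕ → K := fun t => v t * (w t)⁻¹ with hr
  set t₀ : ℕ := (2 * a) % (2 * s + 2) with ht₀
  set T : Finset ℕ := (Finset.range (2 * s + 2)).erase t₀ with hT
  have hF : fF q δ x y ≠ 0 := by
    rw [hx, hy, Ne, S.f_zero_iff]
    intro hdvd
    apply hab
    have h2 : ((2 * s + 2 : ℕ) : ℤ) = 2 * ((s + 1 : ℕ) : ℤ) := by push_cast; ring
    rw [h2] at hdvd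
    have h3 : ((2 * b : ℕ) : ℤ) - ((2 * a : ℕ) : ℤ) = 2 * ((b : ℤ) - a) := by push_cast; ring
    rw [h3] at hdvd
    exact (mul_dvd_mul_iff_left (by norm_num : (2 : ℤ) ≠ 0)).mp hdvd
  have hwne : ∀ t ∈ T, w t ≠ 0 := by
    intro t ht
    obtain ⟨hne, htr⟩ := Finset.mem_erase.mp ht
    exact S.f_ne_zero_of_ne_t0 a t (Finset.mem_range.mp htr) hne
  -- term at t₀ vanishes
  rw [← Finset.sum_erase_add _ _ (S.t0_mem a)]
  have hwt0 : etaF s (w t₀) = 0 := by rw [hw]; simp only; rw [S.f_t0_zero a, eta_zero]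
  rw [show etaF s (w t₀) * etaF s (v t₀) = 0 by rw [hwt0, zero_mul], add_zero]
  -- rewrite terms as eta of ratio
  have hterm : ∀ t ∈ T, etaF s (w t) * etaF s (v t) = etaF s (r t) := by
    intro t ht
    have hwt := hwne t ht
    have hDw : IsD q (w t) := S.f_isD x _
    have hDv : IsD q (v t) := S.f_isD y _
    have hDr : IsD q (r t) := S.isD_mul hDv (S.isD_inv hDw)
    have hvr : v t = r t * w t := by
      rw [hr]; field_simp
    calc etaF s (w t) * etaF s (v t) = etaF s (w t * v t) := (S.eta_mul hDw hDv).symm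
      _ = etaF s ((w t * w t) * r t) := by rw [hvr]; ring_nf
      _ = etaF s (w t * w t) * etaF s (r t) := S.eta_mul (S.isD_mul hDw hDw) hDr
      _ = etaF s (r t) := by
          rw [(S.eta_mul hDw hDw), S.eta_sq hwt, one_mul]
  rw [Finset.sum_congr rfl hterm]
  -- injectivity
  have hinj : ∀ t1 ∈ T, ∀ t2 ∈ T, r t1 = r t2 → t1 = t2 := by
    intro t1 ht1 t2 ht2 hrr
    have hw1 := hwne t1 ht1
    have hw2 := hwne t2 ht2
    have hv12 : v t1 * w t2 = v t2 * w t1 := by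
      rw [hr] at hrr
      field_simp at hrr
      linear_combination hrr
    have h1 : fF q δ x y * (g : K) ^ t1 = w t1 * y - v t1 * x := S.plucker x y _
    have h2 : fF q δ x y * (g : K) ^ t2 = w t2 * y - v t2 * x := S.plucker x y _
    have hE0 : (g : K) ^ t1 * w t2 = (g : K) ^ t2 * w t1 := by
      have hz : fF q δ x y * ((g : K) ^ t1 * w t2 - (g : K) ^ t2 * w t1) = 0 := by
        calc fF q δ x y * ((g : K) ^ t1 * w t2 - (g : K) ^ t2 * w t1)
            = (fF q δ x y * (g : K) ^ t1) * w t2 - (fF q δ x y * (g : K) ^ t2) * w t1 := by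
              ring
          _ = (w t1 * y - v t1 * x) * w t2 - (w t2 * y - v t2 * x) * w t1 := by rw [h1, h2]
          _ = (v t2 * w t1 - v t1 * w t2) * x := by ring
          _ = 0 := by rw [sub_eq_zero.mpr hv12.symm, zero_mul]
      rcases mul_eq_zero.mp hz with h | h
      · exact absurd h hF
      · exact sub_eq_zero.mp h
    have hE1 : ((g : K) ^ t1) ^ q * w t2 = ((g : K) ^ t2) ^ q * w t1 := by
      have := congrArg (fun z : K => z ^ q) hE0
      simp only [mul_pow] at this
      rwa [S.f_isD x ((g:K)^t1), S.f_isD x ((g:K)^t2)] at this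
    have hww : w t1 * w t2 ≠ 0 := mul_ne_zero hw1 hw2
    have hE2 : ((g : K) ^ t1) ^ q * (g : K) ^ t2 = ((g : K) ^ t2) ^ q * (g : K) ^ t1 := by
      apply mul_right_cancel₀ hww
      calc ((g : K) ^ t1) ^ q * (g : K) ^ t2 * (w t1 * w t2)
          = (((g : K) ^ t1) ^ q * w t2) * ((g : K) ^ t2 * w t1) := by ring
        _ = (((g : K) ^ t2) ^ q * w t1) * ((g : K) ^ t1 * w t2) := by rw [hE1, ← hE0]
        _ = ((g : K) ^ t2) ^ q * (g : K) ^ t1 * (w t1 * w t2) := by ring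
    have hE3 : (g : K) ^ (t1 * q + t2) = (g : K) ^ (t2 * q + t1) := by
      rw [pow_add, pow_add, pow_mul, pow_mul]
      exact hE2
    rw [S.gpow_eq_gpow_iff, Nat.modEq_iff_dvd] at hE3
    have heq : ((t2 * q + t1 : ℕ) : ℤ) - ((t1 * q + t2 : ℕ) : ℤ)
        = (2 * s : ℤ) * ((t2 : ℤ) - t1) := by push_cast [S.hqs]; ring
    rw [heq, show ((4 * s * (s + 1) : ℕ) : ℤ) = (2 * s : ℤ) * (2 * s + 2 : ℤ) by
      push_cast; ring] at hE3
    have hs0 : (2 * s : ℤ) ≠ 0 := by have := S.hs2; positivity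
    have hdvd := (mul_dvd_mul_iff_left hs0).mp hE3
    obtain ⟨hne1, htr1⟩ := Finset.mem_erase.mp ht1
    obtain ⟨hne2, htr2⟩ := Finset.mem_erase.mp ht2
    have hb1 := Finset.mem_range.mp htr1
    have hb2 := Finset.mem_range.mp htr2
    have hz : (t2 : ℤ) - t1 = 0 := by
      apply Int.eq_zero_of_abs_lt_dvd hdvd
      rw [abs_sub_lt_iff]
      constructor <;> push_cast <;> omega
    omega
  -- image is Dfin
  have hsub : T.image r ⊆ Dfin s K g := by
    intro u hu
    obtain ⟨t, ht, hteq⟩ := Finset.mem_image.mp hu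
    rw [← hteq]
    exact S.mem_Dfin_of_isD (S.isD_mul (S.f_isD y _) (S.isD_inv (S.f_isD x _)))
  have hcardT : T.card = 2 * s + 1 := by
    rw [hT, Finset.card_erase_of_mem (S.t0_mem a), Finset.card_range]
    omega
  have himg : T.image r = Dfin s K g := by
    apply Finset.eq_of_subset_of_card_le hsub
    rw [S.card_Dfin, Finset.card_image_of_injOn (fun t1 ht1 t2 ht2 h =>
      hinj t1 ht1 t2 ht2 h), hcardT]
  calc ∑ t ∈ T, etaF s (r t) = ∑ u ∈ T.image r, etaF s u :=
        (Finset.sum_image hinj).symm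
    _ = ∑ u ∈ Dfin s K g, etaF s u := by rw [himg]
    _ = 0 := S.sum_Dfin


/-- entries of the two circulant blocks -/
def e0 (q s : ℕ) {K : Type} [Field K] [DecidableEq K] (g : Kˣ) (a b : ℕ) : ℤ :=
  (-1) ^ (a + b) * etaF s (fF q ((g : K) ^ (s + 1)) ((g : K) ^ (2 * a)) ((g : K) ^ (2 * b)))

def e1 (q s : ℕ) {K : Type} [Field K] [DecidableEq K] (g : Kˣ) (a b : ℕ) : ℤ :=
  (-1) ^ (a + b) *
    etaF s (fF q ((g : K) ^ (s + 1)) ((g : K) ^ (2 * a)) ((g : K) ^ (2 * b + 1)))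

lemma periodic_mod {n : ℕ} (P : ℕ → ℤ) (hP : ∀ a, P (a + n) = P a) (a : ℕ) :
    P (a % n) = P a := by
  have key : ∀ t a', P (a' + n * t) = P a' := by
    intro t
    induction t with
    | zero => simp
    | succ t ih =>
        intro a'
        rw [show a' + n * (t + 1) = (a' + n * t) + n by ring, hP, ih]
  conv_rhs => rw [← Nat.mod_add_div a n, key (a / n) (a % n)]

lemma Setup.eta_c_mul (S : Setup q s K g) {x : K} (hx : IsD q x) :
    etaF s ((g : K) ^ (2 * s + 2) * x) = -etaF s x := by
  rw [S.eta_mul S.c_isD hx]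
  have := S.eta_c_pow 1
  rw [pow_one, pow_one] at this
  rw [this]; ring

lemma Setup.e0_shift_fst (S : Setup q s K g) (a b : ℕ) :
    e0 q s g (a + (s + 1)) b = e0 q s g a b := by
  unfold e0
  have h1 : (g : K) ^ (2 * (a + (s + 1))) = (g : K) ^ (2 * s + 2) * (g : K) ^ (2 * a) := by
    rw [← pow_add]; congr 1; ring
  rw [h1, S.f_lin1 S.c_isD, S.eta_c_mul (S.f_isD _ _)]
  have h2 : (-1 : ℤ) ^ (a + (s + 1) + b) = -(-1 : ℤ) ^ (a + b) := by
    rw [show a + (s + 1) + b = (a + b) + (s + 1) by ring, pow_add, pow_succ, (Nat.even_iff.mpr S.hse).neg_one_pow]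
    ring
  rw [h2]; ring

lemma Setup.e0_shift_snd (S : Setup q s K g) (a b : ℕ) :
    e0 q s g a (b + (s + 1)) = e0 q s g a b := by
  unfold e0
  have h1 : (g : K) ^ (2 * (b + (s + 1))) = (g : K) ^ (2 * s + 2) * (g : K) ^ (2 * b) := by
    rw [← pow_add]; congr 1; ring
  rw [h1, S.f_lin2 S.c_isD, S.eta_c_mul (S.f_isD _ _)]
  have h2 : (-1 : ℤ) ^ (a + (b + (s + 1))) = -(-1 : ℤ) ^ (a + b) := by
    rw [show a + (b + (s + 1)) = (a + b) + (s + 1) by ring, pow_add, pow_succ, (Nat.even_iff.mpr S.hse).neg_one_pow]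
    ring
  rw [h2]; ring

lemma Setup.e1_shift_fst (S : Setup q s K g) (a b : ℕ) :
    e1 q s g (a + (s + 1)) b = e1 q s g a b := by
  unfold e1
  have h1 : (g : K) ^ (2 * (a + (s + 1))) = (g : K) ^ (2 * s + 2) * (g : K) ^ (2 * a) := by
    rw [← pow_add]; congr 1; ring
  rw [h1, S.f_lin1 S.c_isD, S.eta_c_mul (S.f_isD _ _)]
  have h2 : (-1 : ℤ) ^ (a + (s + 1) + b) = -(-1 : ℤ) ^ (a + b) := by
    rw [show a + (s + 1) + b = (a + b) + (s + 1) by ring, pow_add, pow_succ, (Nat.even_iff.mpr S.hse).neg_one_pow]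
    ring
  rw [h2]; ring

lemma Setup.e1_shift_snd (S : Setup q s K g) (a b : ℕ) :
    e1 q s g a (b + (s + 1)) = e1 q s g a b := by
  unfold e1
  have h1 : (g : K) ^ (2 * (b + (s + 1)) + 1) = (g : K) ^ (2 * s + 2) * (g : K) ^ (2 * b + 1) := by
    rw [← pow_add]; congr 1; ring
  rw [h1, S.f_lin2 S.c_isD, S.eta_c_mul (S.f_isD _ _)]
  have h2 : (-1 : ℤ) ^ (a + (b + (s + 1))) = -(-1 : ℤ) ^ (a + b) := by
    rw [show a + (b + (s + 1)) = (a + b) + (s + 1) by ring, pow_add, pow_succ, (Nat.even_iff.mpr S.hse).neg_one_pow]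
    ring
  rw [h2]; ring

lemma Setup.f_scale (S : Setup q s K g) (z x y : K) :
    fF q ((g : K) ^ (s + 1)) (z * x) (z * y) = (z * z ^ q) * fF q ((g : K) ^ (s + 1)) x y := by
  unfold fF
  rw [mul_pow, mul_pow]
  ring

lemma Setup.gk_scale (S : Setup q s K g) (k : ℕ) :
    (g : K) ^ (2 * k) * ((g : K) ^ (2 * k)) ^ q = ((g : K) ^ (2 * s + 2)) ^ (2 * k) := by
  rw [← pow_mul, ← pow_add, ← pow_mul]
  congr 1
  rw [S.hqs]; ring

lemma Setup.eta_c2k_mul (S : Setup q s K g) {x : K} (hx : IsD q x) (k : ℕ) :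
    etaF s (((g : K) ^ (2 * s + 2)) ^ (2 * k) * x) = etaF s x := by
  rw [S.eta_mul (S.isD_pow S.c_isD (2 * k)) hx, S.eta_c_pow,
    Even.neg_one_pow ⟨k, by ring⟩, one_mul]

lemma Setup.e0_diag_shift (S : Setup q s K g) (a b k : ℕ) :
    e0 q s g (a + k) (b + k) = e0 q s g a b := by
  unfold e0
  have h1 : (g : K) ^ (2 * (a + k)) = (g : K) ^ (2 * k) * (g : K) ^ (2 * a) := by
    rw [← pow_add]; congr 1; ring
  have h2 : (g : K) ^ (2 * (b + k)) = (g : K) ^ (2 * k) * (g : K) ^ (2 * b) := by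
    rw [← pow_add]; congr 1; ring
  rw [h1, h2, S.f_scale, S.gk_scale, S.eta_c2k_mul (S.f_isD _ _)]
  congr 1
  rw [show (a + k) + (b + k) = (a + b) + 2 * k by ring, pow_add,
    Even.neg_one_pow (⟨k, by ring⟩ : Even (2 * k)), mul_one]

lemma Setup.e1_diag_shift (S : Setup q s K g) (a b k : ℕ) :
    e1 q s g (a + k) (b + k) = e1 q s g a b := by
  unfold e1
  have h1 : (g : K) ^ (2 * (a + k)) = (g : K) ^ (2 * k) * (g : K) ^ (2 * a) := by
    rw [← pow_add]; congr 1; ring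
  have h2 : (g : K) ^ (2 * (b + k) + 1) = (g : K) ^ (2 * k) * (g : K) ^ (2 * b + 1) := by
    rw [← pow_add]; congr 1; ring
  rw [h1, h2, S.f_scale, S.gk_scale, S.eta_c2k_mul (S.f_isD _ _)]
  congr 1
  rw [show (a + k) + (b + k) = (a + b) + 2 * k by ring, pow_add,
    Even.neg_one_pow (⟨k, by ring⟩ : Even (2 * k)), mul_one]


lemma Setup.e0_symm (S : Setup q s K g) (a b : ℕ) : e0 q s g b a = e0 q s g a b := by
  unfold e0
  rw [S.f_antisymm, S.eta_neg (S.f_isD _ _), add_comm b a]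

lemma Setup.e0_diag (S : Setup q s K g) (a : ℕ) : e0 q s g a a = 0 := by
  unfold e0
  have : fF q ((g : K) ^ (s + 1)) ((g : K) ^ (2 * a)) ((g : K) ^ (2 * a)) = 0 := by
    rw [S.f_zero_iff]; simp
  rw [this, eta_zero, mul_zero]

lemma Setup.e0_pm (S : Setup q s K g) (a b : ℕ)
    (hab : ¬ ((s + 1 : ℕ) : ℤ) ∣ ((b : ℤ) - (a : ℤ))) :
    e0 q s g a b = 1 ∨ e0 q s g a b = -1 := by
  unfold e0
  have hne : fF q ((g : K) ^ (s + 1)) ((g : K) ^ (2 * a)) ((g : K) ^ (2 * b)) ≠ 0 := by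
    rw [Ne, S.f_zero_iff]
    intro hdvd
    apply hab
    have h2 : ((2 * s + 2 : ℕ) : ℤ) = 2 * ((s + 1 : ℕ) : ℤ) := by push_cast; ring
    have h3 : ((2 * b : ℕ) : ℤ) - ((2 * a : ℕ) : ℤ) = 2 * ((b : ℤ) - a) := by push_cast; ring
    rw [h2, h3] at hdvd
    exact (mul_dvd_mul_iff_left (by norm_num : (2 : ℤ) ≠ 0)).mp hdvd
  rcases eta_pm (s := s) hne with h | h <;> rw [h] <;>
    rcases Nat.even_or_odd (a + b) with hp | hp <;>
      rw [hp.neg_one_pow] <;> norm_num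

lemma Setup.e1_pm (S : Setup q s K g) (a b : ℕ) :
    e1 q s g a b = 1 ∨ e1 q s g a b = -1 := by
  unfold e1
  have hne : fF q ((g : K) ^ (s + 1)) ((g : K) ^ (2 * a)) ((g : K) ^ (2 * b + 1)) ≠ 0 := by
    rw [Ne, S.f_zero_iff]
    intro hdvd
    have h2 : (2 : ℤ) ∣ ((2 * b + 1 : ℕ) : ℤ) - ((2 * a : ℕ) : ℤ) :=
      dvd_trans ⟨((s : ℤ) + 1), by push_cast; ring⟩ hdvd
    obtain ⟨c, hc⟩ := h2
    omega
  rcases eta_pm (s := s) hne with h | h <;> rw [h] <;>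
    rcases Nat.even_or_odd (a + b) with hp | hp <;>
      rw [hp.neg_one_pow] <;> norm_num

/-- sum over `ZMod (s+1)` equals sum over `range (s+1)` -/
lemma zmod_val_sum {n : ℕ} [NeZero n] (F : ℕ → ℤ) :
    ∑ k : ZMod n, F k.val = ∑ t ∈ Finset.range n, F t := by
  have himg : Finset.image ZMod.val (Finset.univ : Finset (ZMod n)) = Finset.range n := by
    ext t
    simp only [Finset.mem_image, Finset.mem_univ, true_and, Finset.mem_range]
    constructor
    · rintro ⟨k, rfl⟩; exact ZMod.val_lt k
    · intro ht; exact ⟨(t : ZMod n), ZMod.val_cast_of_lt ht⟩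
  rw [← himg, Finset.sum_image (fun x _ y _ h => ZMod.val_injective n h)]

lemma range_pair_sum (h : ℕ → ℤ) (n : ℕ) :
    ∑ t ∈ Finset.range n, (h (2 * t) + h (2 * t + 1)) = ∑ t ∈ Finset.range (2 * n), h t := by
  induction n with
  | zero => simp
  | succ n ih =>
      rw [Finset.sum_range_succ, ih, show 2 * (n + 1) = (2 * n + 1) + 1 by ring,
        Finset.sum_range_succ, Finset.sum_range_succ]
      ring

lemma Setup.matrices (S : Setup q s K g) :
    ∃ M0 M1 : Matrix (ZMod (s + 1)) (ZMod (s + 1)) ℤ,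
      IsCirculant M0 ∧ IsCirculant M1 ∧ M0ᵀ = M0 ∧
      (∀ i, M0 i i = 0) ∧ (∀ i j, i ≠ j → M0 i j = 1 ∨ M0 i j = -1) ∧
      (∀ i j, M1 i j = 1 ∨ M1 i j = -1) ∧
      M0 * M0ᵀ + M1 * M1ᵀ = ((2 * s + 1 : ℕ) : ℤ) • 1 := by
  refine ⟨fun i j => e0 q s g i.val j.val, fun i j => e1 q s g i.val j.val, ?_, ?_, ?_, ?_, ?_, ?_, ?_⟩
  · -- circulant M0
    intro i j k
    simp only
    rw [ZMod.val_add i k, ZMod.val_add j k,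
      periodic_mod (fun a => e0 q s g a ((j.val + k.val) % (s + 1)))
        (fun a => S.e0_shift_fst a _) (i.val + k.val),
      periodic_mod (fun b => e0 q s g (i.val + k.val) b)
        (fun b => S.e0_shift_snd _ b) (j.val + k.val),
      S.e0_diag_shift]
  · -- circulant M1
    intro i j k
    simp only
    rw [ZMod.val_add i k, ZMod.val_add j k,
      periodic_mod (fun a => e1 q s g a ((j.val + k.val) % (s + 1)))
        (fun a => S.e1_shift_fst a _) (i.val + k.val),
      periodic_mod (fun b => e1 q s g (i.val + k.val) b)
        (fun b => S.e1_shift_snd _ b) (j.val + k.val),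
      S.e1_diag_shift]
  · ext i j
    exact S.e0_symm i.val j.val
  · intro i
    exact S.e0_diag i.val
  · intro i j hij
    apply S.e0_pm
    intro hdvd
    apply hij
    have h1 := ZMod.val_lt i
    have h2 := ZMod.val_lt j
    have hz : (j.val : ℤ) - i.val = 0 := by
      apply Int.eq_zero_of_abs_lt_dvd hdvd
      rw [abs_sub_lt_iff]
      constructor <;> push_cast <;> omega
    have : i.val = j.val := by omega
    exact (ZMod.val_injective _ this)
  · intro i j
    exact S.e1_pm i.val j.val
  · ext i j
    erw [Matrix.add_apply, Matrix.mul_apply, Matrix.mul_apply]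
    show (∑ k : ZMod (s + 1), e0 q s g i.val k.val * e0 q s g j.val k.val) +
      (∑ k : ZMod (s + 1), e1 q s g i.val k.val * e1 q s g j.val k.val) = _
    rw [← Finset.sum_add_distrib]
    set a := i.val with ha
    set b := j.val with hb
    have hterm : ∀ k : ZMod (s + 1),
        e0 q s g a k.val * e0 q s g b k.val + e1 q s g a k.val * e1 q s g b k.val
        = (-1) ^ (a + b) *
          (etaF s (fF q ((g : K) ^ (s+1)) ((g : K) ^ (2*a)) ((g : K) ^ (2*k.val))) *
            etaF s (fF q ((g : K) ^ (s+1)) ((g : K) ^ (2*b)) ((g : K) ^ (2*k.val)))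
          + etaF s (fF q ((g : K) ^ (s+1)) ((g : K) ^ (2*a)) ((g : K) ^ (2*k.val+1))) *
            etaF s (fF q ((g : K) ^ (s+1)) ((g : K) ^ (2*b)) ((g : K) ^ (2*k.val+1)))) := by
      intro k
      unfold e0 e1
      have hk : (-1 : ℤ) ^ (a + k.val) * (-1 : ℤ) ^ (b + k.val) = (-1 : ℤ) ^ (a + b) := by
        rw [← pow_add, show (a + k.val) + (b + k.val) = (a + b) + 2 * k.val by ring,
          pow_add, Even.neg_one_pow (⟨k.val, by ring⟩ : Even (2 * k.val)), mul_one]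
      have expand : ∀ (u v u' v' : ℤ),
          ((-1 : ℤ) ^ (a + k.val) * u) * ((-1 : ℤ) ^ (b + k.val) * v) +
            ((-1 : ℤ) ^ (a + k.val) * u') * ((-1 : ℤ) ^ (b + k.val) * v')
          = ((-1 : ℤ) ^ (a + k.val) * (-1 : ℤ) ^ (b + k.val)) * (u * v + u' * v') := by
        intro u v u' v'; ring
      rw [expand, hk]
    rw [Finset.sum_congr rfl (fun k _ => hterm k), ← Finset.mul_sum]
    have hzs := zmod_val_sum (n := s + 1) (fun t =>
      etaF s (fF q ((g : K) ^ (s+1)) ((g : K) ^ (2*a)) ((g : K) ^ (2*t))) *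
        etaF s (fF q ((g : K) ^ (s+1)) ((g : K) ^ (2*b)) ((g : K) ^ (2*t)))
      + etaF s (fF q ((g : K) ^ (s+1)) ((g : K) ^ (2*a)) ((g : K) ^ (2*t+1))) *
        etaF s (fF q ((g : K) ^ (s+1)) ((g : K) ^ (2*b)) ((g : K) ^ (2*t+1))))
    rw [hzs, range_pair_sum (fun t =>
      etaF s (fF q ((g : K) ^ (s+1)) ((g : K) ^ (2*a)) ((g : K) ^ t)) *
        etaF s (fF q ((g : K) ^ (s+1)) ((g : K) ^ (2*b)) ((g : K) ^ t))) (s + 1),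
      show 2 * (s + 1) = 2 * s + 2 by ring]
    by_cases hij : i = j
    · subst hij
      have hba : b = a := hb.trans ha.symm
      rw [hba, S.sum_diag a, Even.neg_one_pow (⟨a, rfl⟩ : Even (a + a)), one_mul,
        Matrix.smul_apply, Matrix.one_apply_eq, smul_eq_mul, mul_one]
      push_cast; ring
    · have hab : ¬ ((s + 1 : ℕ) : ℤ) ∣ ((b : ℤ) - (a : ℤ)) := by
        intro hdvd
        apply hij
        have h1 := ZMod.val_lt i
        have h2 := ZMod.val_lt j
        have hz : (b : ℤ) - a = 0 := by
          apply Int.eq_zero_of_abs_lt_dvd hdvd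
          rw [abs_sub_lt_iff]
          constructor <;> push_cast <;> omega
        have : i.val = j.val := by omega
        exact (ZMod.val_injective _ this)
      rw [S.sum_off a b hab, mul_zero, Matrix.smul_apply,
        Matrix.one_apply_ne hij, smul_zero]


end Propus

open Propus

/-- Let `q ≡ 1 (mod 4)` be a prime power and `m = (q+1)/2` (i.e. `2m = q + 1`).
Then propus matrices of order `m` exist: circulant `±1` matrices `A, B, C, D`
with `Aᵀ = A`, `B = C` and `A·Aᵀ + B·Bᵀ + C·Cᵀ + D·Dᵀ = 4m·I`; consequently
there exists a symmetric Hadamard matrix of order `2(q+1)`. -/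
theorem propus_matrices_exist (q m : ℕ) [NeZero m]
    (hq : IsPrimePow q) (hq4 : q % 4 = 1) (hm : 2 * m = q + 1) :
    (∃ A B C D : Matrix (ZMod m) (ZMod m) ℤ,
      IsCirculant A ∧ IsCirculant B ∧ IsCirculant C ∧ IsCirculant D ∧
      (∀ i j, A i j = 1 ∨ A i j = -1) ∧
      (∀ i j, B i j = 1 ∨ B i j = -1) ∧
      (∀ i j, C i j = 1 ∨ C i j = -1) ∧
      (∀ i j, D i j = 1 ∨ D i j = -1) ∧
      Aᵀ = A ∧ B = C ∧
      A * Aᵀ + B * Bᵀ + C * Cᵀ + D * Dᵀ =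
        ((4 * m : ℕ) : ℤ) • (1 : Matrix (ZMod m) (ZMod m) ℤ)) ∧
    (∃ H : Matrix (Fin (2 * (q + 1))) (Fin (2 * (q + 1))) ℤ,
      (∀ i j, H i j = 1 ∨ H i j = -1) ∧
      H * Hᵀ = ((2 * (q + 1) : ℕ) : ℤ) •
        (1 : Matrix (Fin (2 * (q + 1))) (Fin (2 * (q + 1))) ℤ) ∧
      Hᵀ = H) := by
  obtain ⟨s, rfl⟩ : ∃ s, m = s + 1 := ⟨m - 1, by have := NeZero.ne m; omega⟩
  have hq2 : 2 ≤ q := hq.two_le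
  have hq1 : q = 2 * s + 1 := by omega
  have hq5 : 5 ≤ q := by omega
  have hs2 : 2 ≤ s := by omega
  have hse : s % 2 = 0 := by omega
  obtain ⟨p, e, hp, he, hpe⟩ := hq
  haveI hfp : Fact p.Prime := ⟨hp.nat_prime⟩
  set K := GaloisField p (2 * e) with hK
  letI : Fintype K := Fintype.ofFinite K
  letI : DecidableEq K := Classical.decEq K
  have hcard : Fintype.card K = q ^ 2 := by
    rw [← Nat.card_eq_fintype_card, GaloisField.card p (2 * e) (by omega), ← hpe]
    ring
  have hpodd : 2 < p := by
    rcases hp.nat_prime.eq_two_or_odd' with h2 | hodd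
    · exfalso
      subst h2
      have hqe : Even q := by
        rw [← hpe]
        exact (Nat.even_pow).mpr ⟨even_two, by omega⟩
      rw [Nat.even_iff] at hqe
      omega
    · have h2le := hfp.out.two_le
      rw [Nat.odd_iff] at hodd
      omega
  haveI : Fact (2 < p) := ⟨hpodd⟩
  have hK2 : (-1 : K) ≠ 1 := CharP.neg_one_ne_one K p
  obtain ⟨g, hg⟩ := IsCyclic.exists_generator (α := Kˣ)
  have horder : orderOf g = 4 * s * (s + 1) := by
    rw [orderOf_eq_card_of_forall_mem_zpowers hg, Nat.card_eq_fintype_card,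
      Fintype.card_units, hcard]
    have : q ^ 2 = 4 * s * (s + 1) + 1 := by rw [hq1]; ring
    omega
  have hfrob : ∀ x y : K, (x - y) ^ q = x ^ q - y ^ q := by
    intro x y
    rw [← hpe]
    exact sub_pow_char_pow x y e
  have S : Propus.Setup q s K g := ⟨hq1, hs2, hse, hcard, horder, hg, hfrob, hK2⟩
  obtain ⟨M0, M1, hc0, hc1, hsym, hdiag0, hoffpm, hm1pm, hmain⟩ := S.matrices
  set A : Matrix (ZMod (s + 1)) (ZMod (s + 1)) ℤ := M0 + 1 with hA
  set Dm : Matrix (ZMod (s + 1)) (ZMod (s + 1)) ℤ := M0 - 1 with hD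
  have hcA : IsCirculant A := circulant_add hc0 circulant_one
  have hcD : IsCirculant Dm := circulant_sub hc0 circulant_one
  have hAs : Aᵀ = A := by rw [hA, Matrix.transpose_add, hsym, Matrix.transpose_one]
  have hDs : Dmᵀ = Dm := by rw [hD, Matrix.transpose_sub, hsym, Matrix.transpose_one]
  have hAe : ∀ i j, A i j = 1 ∨ A i j = -1 := by
    intro i j
    by_cases hij : i = j
    · subst hij
      left
      rw [hA, Matrix.add_apply, hdiag0 i, Matrix.one_apply_eq, zero_add]
    · rcases hoffpm i j hij with h | h <;>
        rw [hA, Matrix.add_apply, Matrix.one_apply_ne hij, h, add_zero] <;> simp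
  have hDe : ∀ i j, Dm i j = 1 ∨ Dm i j = -1 := by
    intro i j
    by_cases hij : i = j
    · subst hij
      right
      rw [hD, Matrix.sub_apply, hdiag0 i, Matrix.one_apply_eq, zero_sub]
    · rcases hoffpm i j hij with h | h <;>
        rw [hD, Matrix.sub_apply, Matrix.one_apply_ne hij, h, sub_zero] <;> simp
  have hsum : A * Aᵀ + M1 * M1ᵀ + M1 * M1ᵀ + Dm * Dmᵀ
      = ((4 * (s + 1) : ℕ) : ℤ) • (1 : Matrix (ZMod (s + 1)) (ZMod (s + 1)) ℤ) := by
    have expand : A * Aᵀ + M1 * M1ᵀ + M1 * M1ᵀ + Dm * Dmᵀ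
        = (M0 * M0ᵀ + M1 * M1ᵀ) + (M0 * M0ᵀ + M1 * M1ᵀ) + ((1 : Matrix (ZMod (s + 1)) (ZMod (s + 1)) ℤ) + 1) := by
      rw [hAs, hDs, hA, hD, hsym]
      noncomm_ring
    rw [expand, hmain]
    have h2 : ((1 : Matrix (ZMod (s + 1)) (ZMod (s + 1)) ℤ) + 1)
        = ((2 : ℤ)) • (1 : Matrix (ZMod (s + 1)) (ZMod (s + 1)) ℤ) := (two_smul ℤ _).symm
    rw [h2, ← add_smul, ← add_smul]
    congr 1
    push_cast
    ring
  constructor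
  · exact ⟨A, M1, M1, Dm, hcA, hc1, hc1, hcD, hAe, hm1pm, hm1pm, hDe, hAs, rfl, hsum⟩
  · obtain ⟨H', hH'e, hH'prod, hH'sym⟩ :=
      hadamard_of_propus A M1 Dm hcA hc1 hcD hAs hAe hm1pm hDe hsum
    have hcards : Fintype.card (Fin (2 * (q + 1)))
        = Fintype.card (Fin 4 × ZMod (s + 1)) := by
      rw [Fintype.card_fin, Fintype.card_prod, Fintype.card_fin, ZMod.card]
      omega
    set eqv : Fin (2 * (q + 1)) ≃ Fin 4 × ZMod (s + 1) := Fintype.equivOfCardEq hcards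
      with heqv
    refine ⟨H'.submatrix eqv eqv, ?_, ?_, ?_⟩
    · intro i j
      exact hH'e (eqv i) (eqv j)
    · rw [Matrix.transpose_submatrix, Matrix.submatrix_mul_equiv, hH'prod]
      have hs : ((4 * (s + 1) : ℕ) : ℤ) • (1 : Matrix (Fin 4 × ZMod (s + 1)) (Fin 4 × ZMod (s + 1)) ℤ) = ((2 * (q + 1) : ℕ) : ℤ) • 1 := by
        congr 1
        push_cast
        omega
      rw [hs]
      ext i j
      rw [Matrix.submatrix_apply, Matrix.smul_apply, Matrix.smul_apply,
        Matrix.one_apply, Matrix.one_apply]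
      by_cases h : i = j
      · simp [h]
      · simp [h, (Equiv.apply_eq_iff_eq eqv).ne.mpr h]
    · rw [Matrix.transpose_submatrix, hH'sym]
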